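/- Let (f_i)_{i∈ℤ} be a sequence of orientation-preserving C¹ diffeomorphisms of [0,1] such that f_n converges to the identity in the C¹ topology as n → ±∞. Then for every ε > 0 there exist an integer n₀ and a sequence (g_i)_{i∈ℤ} of C¹ diffeomorphisms of [0,1], each ε-C¹-close to the identity, such that g_i = f_i for all |i| ≥ n₀ and g_{n₀}∘g_{n₀−1}∘⋯∘g_{−n₀+1}∘g_{−n₀} = f_{n₀}∘f_{n₀−1}∘⋯∘f_{−n₀+1}∘f_{−n₀}. -/

import Mathlib

open Set Filter
structure IsIntervalDiffeo (h : ℝ → ℝ) (u v : ℝ) : Prop where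
  contDiffOn : ContDiffOn ℝ 1 h (Set.Icc u v)
  fix_left : h u = u
  fix_right : h v = v
  mono : StrictMonoOn h (Set.Icc u v)
  deriv_pos : ∀ w ∈ Set.Icc u v, 0 < derivWithin h (Set.Icc u v) w

/-- The `C¹` distance from a diffeomorphism of `[0,1]` to the identity. -/
noncomputable def distId (g : ℝ → ℝ) : ℝ :=
  (⨆ x : Set.Icc (0:ℝ) 1, |g x.1 - x.1|) +
    (⨆ x : Set.Icc (0:ℝ) 1, |derivWithin g (Set.Icc (0:ℝ) 1) x.1 - 1|)

/-- `compRange f lo k = f (lo+k) ∘ ⋯ ∘ f (lo+1) ∘ f lo`. -/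
def compRange (f : ℤ → ℝ → ℝ) (lo : ℤ) : ℕ → ℝ → ℝ
  | 0 => f lo
  | (k + 1) => f (lo + (k : ℤ) + 1) ∘ compRange f lo k


local notation "II" => Set.Icc (0:ℝ) 1

lemma udII : UniqueDiffOn ℝ II := uniqueDiffOn_Icc one_pos

lemma neII : Nonempty ↥II := ⟨⟨0, by simp⟩⟩

variable {h a b : ℝ → ℝ}

lemma IsIntervalDiffeo.mapsTo (hd : IsIntervalDiffeo h 0 1) : MapsTo h II II := by
  intro x hx
  constructor
  · rw [← hd.fix_left]
    exact hd.mono.monotoneOn (by simp) hx hx.1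
  · rw [← hd.fix_right]
    exact hd.mono.monotoneOn hx (by simp) hx.2

lemma IsIntervalDiffeo.continuousOn (hd : IsIntervalDiffeo h 0 1) : ContinuousOn h II :=
  hd.contDiffOn.continuousOn

lemma IsIntervalDiffeo.deriv_continuousOn (hd : IsIntervalDiffeo h 0 1) :
    ContinuousOn (derivWithin h II) II :=
  hd.contDiffOn.continuousOn_derivWithin udII le_rfl

lemma IsIntervalDiffeo.surjOn (hd : IsIntervalDiffeo h 0 1) : SurjOn h II II := by
  have := intermediate_value_Icc (zero_le_one (α := ℝ)) hd.continuousOn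
  rw [hd.fix_left, hd.fix_right] at this
  exact this

lemma IsIntervalDiffeo.hasDerivWithinAt (hd : IsIntervalDiffeo h 0 1) {x : ℝ} (hx : x ∈ II) :
    HasDerivWithinAt h (derivWithin h II x) II x :=
  (hd.contDiffOn.differentiableOn one_ne_zero x hx).hasDerivWithinAt

lemma distId_le {c d : ℝ} (h1 : ∀ x ∈ II, |h x - x| ≤ c)
    (h2 : ∀ x ∈ II, |derivWithin h II x - 1| ≤ d) : distId h ≤ c + d := by
  haveI := neII
  exact add_le_add (ciSup_le fun x => h1 x x.2) (ciSup_le fun x => h2 x x.2)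

lemma le_distId_fst (hd : IsIntervalDiffeo h 0 1) {x : ℝ} (hx : x ∈ II) :
    |h x - x| ≤ distId h := by
  haveI := neII
  have hb : BddAbove (range fun x : ↥II => |h x.1 - x.1|) := by
    refine ⟨2, ?_⟩
    rintro r ⟨y, rfl⟩
    have h1 := hd.mapsTo y.2
    have h2 := y.2
    simp only [mem_Icc] at h1 h2
    rw [abs_le]; constructor <;> linarith
  have h1 : |h x - x| ≤ ⨆ x : ↥II, |h x.1 - x.1| := le_ciSup hb ⟨x, hx⟩
  have h2 : (0:ℝ) ≤ ⨆ x : ↥II, |derivWithin h II x.1 - 1| :=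
    Real.iSup_nonneg fun x => abs_nonneg _
  unfold distId; linarith

lemma le_distId_snd (hd : IsIntervalDiffeo h 0 1) {x : ℝ} (hx : x ∈ II) :
    |derivWithin h II x - 1| ≤ distId h := by
  haveI := neII
  obtain ⟨C, hC⟩ := (isCompact_Icc (a := (0:ℝ)) (b := 1)).exists_bound_of_continuousOn
    hd.deriv_continuousOn
  have hb : BddAbove (range fun x : ↥II => |derivWithin h II x.1 - 1|) := by
    refine ⟨C + 1, ?_⟩
    rintro r ⟨y, rfl⟩
    have := hC y.1 y.2
    rw [Real.norm_eq_abs] at this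
    calc |derivWithin h II y.1 - 1| ≤ |derivWithin h II y.1| + 1 := by
          have := abs_sub_abs_le_abs_sub (derivWithin h II y.1) 1
          have h1 := abs_sub (derivWithin h II y.1) 1
          rw [abs_one] at *
          exact (abs_sub _ _).trans (by linarith [abs_one (α := ℝ)])
      _ ≤ C + 1 := by linarith
  have h1 : |derivWithin h II x - 1| ≤ ⨆ x : ↥II, |derivWithin h II x.1 - 1| :=
    le_ciSup hb ⟨x, hx⟩
  have h2 : (0:ℝ) ≤ ⨆ x : ↥II, |h x.1 - x.1| := Real.iSup_nonneg fun x => abs_nonneg _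
  unfold distId; linarith

lemma distId_nonneg : 0 ≤ distId h :=
  add_nonneg (Real.iSup_nonneg fun x => abs_nonneg _) (Real.iSup_nonneg fun x => abs_nonneg _)

lemma id_diffeo : IsIntervalDiffeo (id : ℝ → ℝ) 0 1 := by
  refine ⟨contDiffOn_id, rfl, rfl, fun x _ y _ hxy => hxy, fun w hw => ?_⟩
  rw [derivWithin_id w II (udII w hw)]; norm_num

lemma distId_id : distId (id : ℝ → ℝ) = 0 := by
  have h1 : distId (id : ℝ → ℝ) ≤ 0 + 0 := by
    apply distId_le
    · intro x _; simp
    · intro x hx; rw [derivWithin_id x II (udII x hx)]; simp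
  linarith [distId_nonneg (h := (id : ℝ → ℝ))]


lemma comp_derivWithin (ha : IsIntervalDiffeo a 0 1) (hb : IsIntervalDiffeo b 0 1)
    {x : ℝ} (hx : x ∈ II) :
    HasDerivWithinAt (a ∘ b) (derivWithin a II (b x) * derivWithin b II x) II x :=
  HasDerivWithinAt.comp x (ha.hasDerivWithinAt (hb.mapsTo hx)) (hb.hasDerivWithinAt hx)
    hb.mapsTo

lemma comp_derivWithin_eq (ha : IsIntervalDiffeo a 0 1) (hb : IsIntervalDiffeo b 0 1)
    {x : ℝ} (hx : x ∈ II) :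
    derivWithin (a ∘ b) II x = derivWithin a II (b x) * derivWithin b II x :=
  (comp_derivWithin ha hb hx).derivWithin (udII x hx)

lemma comp_diffeo (ha : IsIntervalDiffeo a 0 1) (hb : IsIntervalDiffeo b 0 1) :
    IsIntervalDiffeo (a ∘ b) 0 1 := by
  refine ⟨ha.contDiffOn.comp hb.contDiffOn hb.mapsTo, ?_, ?_, ?_, ?_⟩
  · show a (b 0) = 0; rw [hb.fix_left, ha.fix_left]
  · show a (b 1) = 1; rw [hb.fix_right, ha.fix_right]
  · exact ha.mono.comp hb.mono hb.mapsTo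
  · intro w hw
    rw [comp_derivWithin_eq ha hb hw]
    exact mul_pos (ha.deriv_pos _ (hb.mapsTo hw)) (hb.deriv_pos _ hw)

lemma distId_comp_lt (ha : IsIntervalDiffeo a 0 1) (hb : IsIntervalDiffeo b 0 1)
    {ε' ε : ℝ} (hε' : ε' ≤ 1) (hε5 : 5 * ε' ≤ ε)
    (hA : distId a < ε') (hB : distId b < ε') : distId (a ∘ b) < ε := by
  have da := distId_nonneg (h := a)
  have db := distId_nonneg (h := b)
  have key : distId (a ∘ b) ≤ (distId a + distId b) +
      (distId a * (1 + distId b) + distId b) := by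
    apply distId_le
    · intro x hx
      have h1 := le_distId_fst ha (hb.mapsTo hx)
      have h2 := le_distId_fst hb hx
      calc |a (b x) - x| ≤ |a (b x) - b x| + |b x - x| := abs_sub_le _ _ _
        _ ≤ distId a + distId b := add_le_add h1 h2
    · intro x hx
      rw [comp_derivWithin_eq ha hb hx]
      have h1 := le_distId_snd ha (hb.mapsTo hx)
      have h2 := le_distId_snd hb hx
      have hbb : |derivWithin b II x| ≤ 1 + distId b := by
        have := abs_sub (derivWithin b II x) 1
        calc |derivWithin b II x| = |(derivWithin b II x - 1) + 1| := by ring_nf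
          _ ≤ |derivWithin b II x - 1| + 1 := (abs_add_le _ _).trans (by simp)
          _ ≤ 1 + distId b := by linarith
      calc |derivWithin a II (b x) * derivWithin b II x - 1|
          = |(derivWithin a II (b x) - 1) * derivWithin b II x + (derivWithin b II x - 1)| := by
            ring_nf
        _ ≤ |(derivWithin a II (b x) - 1) * derivWithin b II x| + |derivWithin b II x - 1| :=
            abs_add_le _ _
        _ ≤ distId a * (1 + distId b) + distId b := by
            rw [abs_mul]
            exact add_le_add (mul_le_mul h1 hbb (abs_nonneg _) da) h2
  nlinarith


def compN (u : ℕ → ℝ → ℝ) : ℕ → ℝ → ℝ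
  | 0 => id
  | (n + 1) => u n ∘ compN u n

lemma compN_succ (u : ℕ → ℝ → ℝ) (n : ℕ) : compN u (n + 1) = u n ∘ compN u n := rfl

lemma compRange_eq_compN (f : ℤ → ℝ → ℝ) (lo : ℤ) :
    ∀ k, compRange f lo k = compN (fun j => f (lo + (j : ℤ))) (k + 1) := by
  intro k
  induction k with
  | zero => simp [compRange, compN]
  | succ k ih =>
    show _ = compN (fun j => f (lo + (j : ℤ))) (k + 1 + 1)
    rw [compN_succ, ← ih]
    show f (lo + (k:ℤ) + 1) ∘ _ = f (lo + ((k+1 : ℕ) : ℤ)) ∘ _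
    congr 1
    push_cast
    ring_nf

lemma compN_add (u : ℕ → ℝ → ℝ) (m : ℕ) :
    ∀ n, compN u (m + n) = compN (fun j => u (m + j)) n ∘ compN u m := by
  intro n
  induction n with
  | zero => simp [compN]
  | succ n ih =>
    show compN u (m + n + 1) = _
    rw [compN_succ, ih, compN_succ]
    rfl

lemma compN_congr {u v : ℕ → ℝ → ℝ} {n : ℕ} (h : ∀ j < n, u j = v j) :
    compN u n = compN v n := by
  induction n with
  | zero => rfl
  | succ n ih =>
    rw [compN_succ, compN_succ, ih fun j hj => h j (Nat.lt_succ_of_lt hj),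
      h n (Nat.lt_succ_self n)]

lemma compN_pair (F : ℤ → ℝ → ℝ) (c : ℤ) :
    ∀ n, compN (fun j => F (c + 2 * (j:ℤ) + 1) ∘ F (c + 2 * (j:ℤ))) n =
      compN (fun j => F (c + (j:ℤ))) (2 * n) := by
  intro n
  induction n with
  | zero => rfl
  | succ n ih =>
    have h2 : 2 * (n + 1) = (2 * n + 1) + 1 := by ring
    rw [compN_succ, ih, h2, compN_succ, compN_succ]
    have e1 : c + ((2 * n + 1 : ℕ) : ℤ) = c + 2 * (n:ℤ) + 1 := by push_cast; ring
    have e2 : c + ((2 * n : ℕ) : ℤ) = c + 2 * (n:ℤ) := by push_cast; ring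
    rw [e1, e2]
    rfl

lemma compN_id (n : ℕ) : compN (fun _ => (id : ℝ → ℝ)) n = id := by
  induction n with
  | zero => rfl
  | succ n ih => rw [compN_succ, ih]; rfl

lemma compN_const_id {u : ℕ → ℝ → ℝ} {n : ℕ} (h : ∀ j < n, u j = id) :
    compN u n = id := by rw [compN_congr h, compN_id]

lemma compN_mapsTo {u : ℕ → ℝ → ℝ} {n : ℕ} (h : ∀ j < n, MapsTo (u j) II II) :
    MapsTo (compN u n) II II := by
  induction n with
  | zero => exact fun x hx => hx
  | succ n ih =>
    rw [compN_succ]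
    exact (h n (Nat.lt_succ_self n)).comp (ih fun j hj => h j (Nat.lt_succ_of_lt hj))

lemma compN_diffeo {u : ℕ → ℝ → ℝ} {n : ℕ} (h : ∀ j < n, IsIntervalDiffeo (u j) 0 1) :
    IsIntervalDiffeo (compN u n) 0 1 := by
  induction n with
  | zero => exact id_diffeo
  | succ n ih =>
    rw [compN_succ]
    exact comp_diffeo (h n (Nat.lt_succ_self n)) (ih fun j hj => h j (Nat.lt_succ_of_lt hj))

lemma frag_one (G : ℝ → ℝ) (hG : IsIntervalDiffeo G 0 1) {ε : ℝ} (hε : 0 < ε) :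
    ∃ k : ℕ, 0 < k ∧ ∃ h : ℕ → ℝ → ℝ,
      (∀ j, IsIntervalDiffeo (h j) 0 1) ∧ (∀ j, distId (h j) < ε) ∧
      (∀ z ∈ II, compN h k z = G z) := by
  classical
  set G' := derivWithin G II with hG'def
  -- lower bound on the derivative
  obtain ⟨xm, hxm, hmin⟩ := (isCompact_Icc (a := (0:ℝ)) (b := 1)).exists_isMinOn
    (nonempty_Icc.2 zero_le_one) hG.deriv_continuousOn
  set m := G' xm with hmdef
  have hm0 : 0 < m := hG.deriv_pos _ hxm
  have hm : ∀ x ∈ II, m ≤ G' x := fun x hx => hmin hx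
  -- upper bound |G' - 1| ≤ C
  obtain ⟨C0, hC0⟩ := (isCompact_Icc (a := (0:ℝ)) (b := 1)).exists_bound_of_continuousOn
    hG.deriv_continuousOn
  set C := C0 + 1 with hCdef
  have hC : ∀ x ∈ II, |G' x - 1| ≤ C := by
    intro x hx
    have := hC0 x hx
    rw [Real.norm_eq_abs] at this
    have h1 : |G' x - 1| ≤ |G' x| + 1 := by
      calc |G' x - 1| ≤ |G' x| + |(1:ℝ)| := abs_sub _ _
        _ = |G' x| + 1 := by rw [abs_one]
    linarith
  have hC0nonneg : 0 ≤ C0 := le_trans (norm_nonneg _) (hC0 xm hxm)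
  have hCpos : 0 < C := by linarith
  set m' := min 1 m with hm'def
  have hm'0 : 0 < m' := lt_min one_pos hm0
  have hm'1 : m' ≤ 1 := min_le_left _ _
  -- the interpolation family
  set P : ℝ → ℝ → ℝ := fun t x => x + t * (G x - x) with hPdef
  have hPd : ∀ t ∈ II, ∀ x ∈ II, HasDerivWithinAt (P t) (1 + t * (G' x - 1)) II x := by
    intro t _ x hx
    have h1 : HasDerivWithinAt (fun y => G y - y) (G' x - 1) II x :=
      (hG.hasDerivWithinAt hx).sub (hasDerivWithinAt_id x II)
    exact (hasDerivWithinAt_id x II).add (h1.const_mul t)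
  have hPlb : ∀ t ∈ II, ∀ x ∈ II, m' ≤ 1 + t * (G' x - 1) := by
    intro t ht x hx
    have h1 := hm x hx
    have h2 : m' ≤ m := min_le_right _ _
    obtain ⟨ht0, ht1⟩ := ht
    nlinarith [mul_nonneg ht0 (sub_nonneg.2 (h2.trans h1))]
  have hPderiv : ∀ t ∈ II, ∀ x ∈ II, derivWithin (P t) II x = 1 + t * (G' x - 1) :=
    fun t ht x hx => (hPd t ht x hx).derivWithin (udII x hx)
  have hPdiffeo : ∀ t ∈ II, IsIntervalDiffeo (P t) 0 1 := by
    intro t ht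
    obtain ⟨ht0, ht1⟩ := ht
    refine ⟨?_, ?_, ?_, ?_, ?_⟩
    · exact contDiffOn_id.add (contDiffOn_const.mul (hG.contDiffOn.sub contDiffOn_id))
    · show (0:ℝ) + t * (G 0 - 0) = 0; rw [hG.fix_left]; ring
    · show (1:ℝ) + t * (G 1 - 1) = 1; rw [hG.fix_right]; ring
    · intro x hx y hy hxy
      show x + t * (G x - x) < y + t * (G y - y)
      have h1 := hG.mono hx hy hxy
      rcases lt_or_eq_of_le ht1 with h2 | h2
      · nlinarith
      · subst h2; simpa using h1
    · intro w hw
      rw [hPderiv t ⟨ht0, ht1⟩ w hw]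
      linarith [hPlb t ⟨ht0, ht1⟩ w hw]
  -- the inverse family
  have hsur : ∀ t, t ∈ II → ∀ y, y ∈ II → ∃ x, x ∈ II ∧ P t x = y := by
    intro t ht y hy
    exact (hPdiffeo t ht).surjOn hy
  set R : ℝ → ℝ → ℝ := fun t y =>
    if H : t ∈ II ∧ y ∈ II then (hsur t H.1 y H.2).choose else y with hRdef
  have hRmem : ∀ t ∈ II, ∀ y ∈ II, R t y ∈ II ∧ P t (R t y) = y := by
    intro t ht y hy
    have : R t y = (hsur t ht y hy).choose := by rw [hRdef]; simp [ht, hy]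
    rw [this]
    exact (hsur t ht y hy).choose_spec
  have hRleft : ∀ t ∈ II, ∀ x ∈ II, R t (P t x) = x := by
    intro t ht x hx
    have h1 := hRmem t ht (P t x) ((hPdiffeo t ht).mapsTo hx)
    exact (hPdiffeo t ht).mono.injOn h1.1 hx h1.2
  have hRmaps : ∀ t ∈ II, MapsTo (R t) II II := fun t ht y hy => (hRmem t ht y hy).1
  have hR0 : ∀ t ∈ II, R t 0 = 0 := by
    intro t ht
    have := hRleft t ht 0 (by simp)
    rwa [(hPdiffeo t ht).fix_left] at this
  have hR1 : ∀ t ∈ II, R t 1 = 1 := by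
    intro t ht
    have := hRleft t ht 1 (by simp)
    rwa [(hPdiffeo t ht).fix_right] at this
  have hRmono : ∀ t ∈ II, StrictMonoOn (R t) II := by
    intro t ht y1 h1 y2 h2 h12
    by_contra hcon
    push_neg at hcon
    have := (hPdiffeo t ht).mono.monotoneOn (hRmaps t ht h2) (hRmaps t ht h1) hcon
    rw [(hRmem t ht y1 h1).2, (hRmem t ht y2 h2).2] at this
    linarith
  have hRcont : ∀ t ∈ II, ContinuousOn (R t) II := by
    intro t ht
    have hbij : Function.Bijective (fun x : ↥II => (⟨P t x.1, (hPdiffeo t ht).mapsTo x.2⟩ : ↥II)) := by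
      constructor
      · intro x y hxy
        apply Subtype.ext
        exact (hPdiffeo t ht).mono.injOn x.2 y.2 (congrArg Subtype.val hxy)
      · intro y
        exact ⟨⟨R t y.1, (hRmem t ht y.1 y.2).1⟩, Subtype.ext (hRmem t ht y.1 y.2).2⟩
    set em : ↥II ≃ ↥II := Equiv.ofBijective _ hbij with hemdef
    have hcont : Continuous ⇑em :=
      Continuous.subtype_mk (ContinuousOn.restrict (hPdiffeo t ht).continuousOn) _
    set homeo := hcont.homeoOfEquivCompactToT2 with hhdef
    have hval : ∀ y : ↥II, R t y.1 = (homeo.symm y).1 := by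
      intro y
      apply (hPdiffeo t ht).mono.injOn (hRmem t ht y.1 y.2).1 (homeo.symm y).2
      rw [(hRmem t ht y.1 y.2).2]
      have : em (homeo.symm y) = y := homeo.apply_symm_apply y
      exact (congrArg Subtype.val this).symm
    rw [continuousOn_iff_continuous_restrict]
    have : restrict II (R t) = fun y => (homeo.symm y).1 := by
      funext y; exact hval y
    change Continuous (restrict II (R t)); rw [this]
    exact continuous_subtype_val.comp homeo.symm.continuous
  have hRderiv : ∀ t ∈ II, ∀ y ∈ II,
      HasDerivWithinAt (R t) (1 + t * (G' (R t y) - 1))⁻¹ II y := by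
    intro t ht y hy
    set x := R t y with hxdef
    have hx : x ∈ II := (hRmem t ht y hy).1
    have hPx : P t x = y := (hRmem t ht y hy).2
    set Q' := 1 + t * (G' x - 1) with hQ'def
    have hQ'pos : 0 < Q' := lt_of_lt_of_le hm'0 (hPlb t ht x hx)
    rw [hasDerivWithinAt_iff_tendsto_slope]
    have T1 : Tendsto (R t) (nhdsWithin y (II \ {y})) (nhdsWithin x (II \ {x})) := by
      rw [tendsto_nhdsWithin_iff]
      constructor
      · have hbase : Tendsto (R t) (nhdsWithin y II) (nhds x) := hRcont t ht y hy
        exact hbase.mono_left (nhdsWithin_mono y diff_subset)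
      · filter_upwards [eventually_mem_nhdsWithin] with y' hy'
        refine ⟨hRmaps t ht hy'.1, ?_⟩
        intro hcon
        apply hy'.2
        have : P t (R t y') = P t x := by rw [hcon]
        rw [(hRmem t ht y' hy'.1).2, hPx] at this
        simpa using this
    have T2 : Tendsto (slope (P t) x) (nhdsWithin x (II \ {x})) (nhds Q') :=
      hasDerivWithinAt_iff_tendsto_slope.mp (hPd t ht x hx)
    have T4 : Tendsto (fun y' => (slope (P t) x (R t y'))⁻¹) (nhdsWithin y (II \ {y}))
        (nhds Q'⁻¹) := (T2.comp T1).inv₀ (ne_of_gt hQ'pos)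
    apply T4.congr'
    filter_upwards [eventually_mem_nhdsWithin] with y' hy'
    have hx' : R t y' ∈ II := hRmaps t ht hy'.1
    have hPx' : P t (R t y') = y' := (hRmem t ht y' hy'.1).2
    rw [slope_def_field, slope_def_field, inv_div, hPx', hPx, ← hxdef]
  -- choose the number of pieces
  set K := 1 + C / m' with hKdef
  have hK0 : 0 < K := by positivity
  obtain ⟨k, hk⟩ := exists_nat_gt (K / ε)
  have hkpos : 0 < k := by
    by_contra hcon
    push_neg at hcon
    interval_cases k
    · simp only [Nat.cast_zero] at hk
      have : 0 < K / ε := by positivity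
      linarith
  have hkR : (0:ℝ) < k := Nat.cast_pos.2 hkpos
  have hKk : K / k < ε := by
    rw [div_lt_iff₀ hkR]
    have : K / ε < k := hk
    rw [div_lt_iff₀ hε] at this
    linarith
  -- the pieces
  set piece : ℕ → ℝ → ℝ := fun j => P ((j + 1 : ℕ) / k) ∘ R ((j : ℕ) / k) with hpiecedef
  set hfin : ℕ → ℝ → ℝ := fun j => if j < k then piece j else id with hfindef
  refine ⟨k, hkpos, hfin, ?_⟩
  -- membership of the interpolation times
  have htmem : ∀ j : ℕ, j ≤ k → ((j:ℝ) / k) ∈ II := by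
    intro j hj
    constructor
    · positivity
    · rw [div_le_one hkR]
      exact_mod_cast hj
  -- key facts about each genuine piece
  have hpiece : ∀ j : ℕ, j < k → IsIntervalDiffeo (piece j) 0 1 ∧ distId (piece j) < ε := by
    intro j hj
    set s := (j : ℝ) / k with hsdef
    set t := ((j + 1 : ℕ) : ℝ) / k with htdef
    have hs : s ∈ II := htmem j (le_of_lt hj)
    have ht : t ∈ II := htmem (j+1) hj
    have hts : t - s = 1 / k := by
      rw [htdef, hsdef, div_sub_div_same]
      congr 1
      push_cast; ring
    have hts0 : 0 ≤ t - s := by rw [hts]; positivity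
    -- derivative of the piece
    have hd : ∀ y ∈ II, HasDerivWithinAt (piece j)
        ((1 + t * (G' (R s y) - 1)) * (1 + s * (G' (R s y) - 1))⁻¹) II y := by
      intro y hy
      have h1 := hRderiv s hs y hy
      have h2 := hPd t ht (R s y) (hRmaps s hs hy)
      exact HasDerivWithinAt.comp y h2 h1 (hRmaps s hs)
    have hdeq : ∀ y ∈ II, derivWithin (piece j) II y =
        (1 + t * (G' (R s y) - 1)) * (1 + s * (G' (R s y) - 1))⁻¹ :=
      fun y hy => (hd y hy).derivWithin (udII y hy)
    have hdiff : IsIntervalDiffeo (piece j) 0 1 := by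
      refine ⟨?_, ?_, ?_, ?_, ?_⟩
      · rw [show (1 : WithTop ℕ∞) = 0 + 1 by norm_num,
          contDiffOn_succ_iff_derivWithin udII]
        refine ⟨fun y hy => (hd y hy).differentiableWithinAt, by simp, ?_⟩
        rw [contDiffOn_zero]
        apply ContinuousOn.congr (f := fun y =>
          (1 + t * (G' (R s y) - 1)) * (1 + s * (G' (R s y) - 1))⁻¹)
        · have hψ : ContinuousOn (fun y => G' (R s y)) II :=
            hG.deriv_continuousOn.comp (hRcont s hs) (hRmaps s hs)
          apply ContinuousOn.mul
          · exact continuousOn_const.add (continuousOn_const.mul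
              (hψ.sub continuousOn_const))
          · apply ContinuousOn.inv₀
            · exact continuousOn_const.add (continuousOn_const.mul
                (hψ.sub continuousOn_const))
            · intro y hy
              have := hPlb s hs (R s y) (hRmaps s hs hy)
              exact ne_of_gt (lt_of_lt_of_le hm'0 this)
        · intro y hy
          exact hdeq y hy
      · show P t (R s 0) = 0
        rw [hR0 s hs, (hPdiffeo t ht).fix_left]
      · show P t (R s 1) = 1
        rw [hR1 s hs, (hPdiffeo t ht).fix_right]
      · exact ((hPdiffeo t ht).mono.comp (hRmono s hs) (hRmaps s hs))
      · intro w hw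
        rw [hdeq w hw]
        have h1 := hPlb t ht (R s w) (hRmaps s hs hw)
        have h2 := hPlb s hs (R s w) (hRmaps s hs hw)
        exact mul_pos (lt_of_lt_of_le hm'0 h1) (inv_pos.2 (lt_of_lt_of_le hm'0 h2))
    refine ⟨hdiff, ?_⟩
    have hsmall : distId (piece j) ≤ (t - s) * 1 + (t - s) * (C / m') := by
      apply distId_le
      · intro y hy
        set x := R s y with hxdef
        have hx : x ∈ II := (hRmem s hs y hy).1
        have hPx : P s x = y := (hRmem s hs y hy).2
        have hGx : |G x - x| ≤ 1 := by
          have h1 := hG.mapsTo hx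
          have h2 := hx
          simp only [mem_Icc] at h1 h2
          rw [abs_le]; constructor <;> linarith
        have : piece j y - y = (t - s) * (G x - x) := by
          show P t (R s y) - y = _
          rw [← hxdef, ← hPx]
          show x + t * (G x - x) - (x + s * (G x - x)) = _
          ring
        rw [this, abs_mul, abs_of_nonneg hts0]
        exact mul_le_mul_of_nonneg_left hGx hts0
      · intro y hy
        rw [hdeq y hy]
        set x := R s y with hxdef
        have hx : x ∈ II := (hRmem s hs y hy).1
        have hden : m' ≤ 1 + s * (G' x - 1) := hPlb s hs x hx
        have hdenpos : 0 < 1 + s * (G' x - 1) := lt_of_lt_of_le hm'0 hden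
        have hnum : |G' x - 1| ≤ C := hC x hx
        have heq : (1 + t * (G' x - 1)) * (1 + s * (G' x - 1))⁻¹ - 1 =
            (t - s) * (G' x - 1) / (1 + s * (G' x - 1)) := by
          rw [eq_div_iff hdenpos.ne', sub_mul, mul_assoc, inv_mul_cancel₀ hdenpos.ne']
          ring
        rw [heq, abs_div, abs_of_pos hdenpos, abs_mul, abs_of_nonneg hts0]
        have e1 : (t - s) * |G' x - 1| ≤ (t - s) * C := mul_le_mul_of_nonneg_left hnum hts0
        calc (t - s) * |G' x - 1| / (1 + s * (G' x - 1)) ≤ (t - s) * C / m' :=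
              div_le_div₀ (by positivity) e1 hm'0 hden
          _ = (t - s) * (C / m') := by ring
    have hfinal : (t - s) * 1 + (t - s) * (C / m') = K / k := by
      rw [hts, hKdef]; ring
    rw [hfinal] at hsmall
    exact lt_of_le_of_lt hsmall hKk
  constructor
  · intro j
    rw [hfindef]
    by_cases hj : j < k
    · simp only [if_pos hj]
      exact (hpiece j hj).1
    · simp only [if_neg hj]
      exact id_diffeo
  constructor
  · intro j
    rw [hfindef]
    by_cases hj : j < k
    · simp only [if_pos hj]
      exact (hpiece j hj).2
    · simp only [if_neg hj]
      rw [distId_id]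
      exact hε
  -- telescoping
  have htel : ∀ j : ℕ, j ≤ k → ∀ z ∈ II, compN hfin j z = P ((j:ℝ)/k) z := by
    intro j
    induction j with
    | zero =>
      intro _ z hz
      have h0 : ((0:ℕ):ℝ)/(k:ℝ) = 0 := by norm_num
      rw [h0]
      show z = z + 0 * (G z - z)
      ring
    | succ j ih =>
      intro hj z hz
      have hjk : j < k := hj
      have h1 : compN hfin (j+1) z = hfin j (compN hfin j z) := rfl
      rw [h1, ih (le_of_lt hjk) z hz, hfindef]
      simp only [if_pos hjk]
      show P (((j+1:ℕ):ℝ)/k) (R ((j:ℝ)/k) (P ((j:ℝ)/k) z)) = _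
      rw [hRleft ((j:ℝ)/k) (htmem j (le_of_lt hjk)) z hz]
  intro z hz
  have := htel k le_rfl z hz
  rw [this]
  show z + (k:ℝ)/k * (G z - z) = G z
  rw [div_self (ne_of_gt hkR)]
  ring


/-- **Lemma (fragmentation).** Let `(fᵢ)_{i∈ℤ}` be orientation-preserving `C¹`
diffeomorphisms of `[0,1]` with `fₙ → id` in the `C¹` topology as `n → ±∞`. For every
`ε > 0` there are `n₀` and a sequence `(gᵢ)` of `C¹` diffeomorphisms of `[0,1]`, each
`ε`-`C¹`-close to the identity, with `gᵢ = fᵢ` for `|i| ≥ n₀` and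
`g_{n₀}∘⋯∘g_{-n₀} = f_{n₀}∘⋯∘f_{-n₀}` on `[0,1]`. -/
theorem fragmentation (f : ℤ → ℝ → ℝ) (hf : ∀ i : ℤ, IsIntervalDiffeo (f i) 0 1)
    (hconv : Tendsto (fun i : ℤ => distId (f i)) cofinite (nhds 0))
    (ε : ℝ) (hε : 0 < ε) :
    ∃ (n₀ : ℕ) (g : ℤ → ℝ → ℝ),
      (∀ i : ℤ, IsIntervalDiffeo (g i) 0 1) ∧
      (∀ i : ℤ, distId (g i) < ε) ∧
      (∀ i : ℤ, (n₀ : ℤ) ≤ |i| → g i = f i) ∧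
      (∀ z ∈ Set.Icc (0:ℝ) 1,
        compRange g (-(n₀ : ℤ)) (2 * n₀) z = compRange f (-(n₀ : ℤ)) (2 * n₀) z) := by
  classical
  set ε' := min (ε/5) 1 with hε'def
  have hε'pos : 0 < ε' := lt_min (by linarith) one_pos
  have hε'le1 : ε' ≤ 1 := min_le_right _ _
  have hε'le : ε' ≤ ε / 5 := min_le_left _ _
  have hε'5 : 5 * ε' ≤ ε := by linarith
  have hε'ε : ε' < ε := by linarith
  have hev : ∀ᶠ i in cofinite, distId (f i) < ε' := hconv.eventually_lt_const hε'pos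
  rw [Int.cofinite_eq, eventually_sup] at hev
  obtain ⟨hbot, htop⟩ := hev
  obtain ⟨A, hA⟩ := eventually_atBot.mp hbot
  obtain ⟨B, hB⟩ := eventually_atTop.mp htop
  set N : ℕ := 1 + A.natAbs + B.natAbs with hNdef
  have hN1 : 1 ≤ N := by omega
  have hsmallf : ∀ i : ℤ, (N:ℤ) ≤ |i| → distId (f i) < ε' := by
    intro i hi
    rcases le_or_gt 0 i with h|h
    · apply hB; rw [abs_of_nonneg h] at hi; omega
    · apply hA; rw [abs_of_neg h] at hi; omega
  set G : ℝ → ℝ := compN (fun j => f (1 - (N:ℤ) + (j:ℤ))) (2*N - 1) with hGdef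
  have hGd : IsIntervalDiffeo G 0 1 := compN_diffeo (fun j _ => hf _)
  obtain ⟨k, hk1, hp, hpd, hps, hptel⟩ := frag_one G hGd hε'pos
  set n₀ : ℕ := N + 2*k with hn₀def
  have hn₀cast : (n₀:ℤ) = (N:ℤ) + 2*(k:ℤ) := by omega
  set g : ℤ → ℝ → ℝ := fun i =>
    if i ≤ -(n₀:ℤ) ∨ (n₀:ℤ) ≤ i then f i
    else if i ≤ -(N:ℤ) - (k:ℤ) then f (2*i + n₀) ∘ f (2*i + n₀ - 1)
    else if i ≤ -(N:ℤ) then hp (i + N + k - 1).toNat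
    else if i < (N:ℤ) + (k:ℤ) then id
    else f (2*i - n₀ + 1) ∘ f (2*i - n₀) with hgdef
  have hg1 : ∀ i : ℤ, i ≤ -(n₀:ℤ) ∨ (n₀:ℤ) ≤ i → g i = f i := by
    intro i hi; simp only [hgdef]; rw [if_pos hi]
  have hg2 : ∀ i : ℤ, -(n₀:ℤ) < i → i ≤ -(N:ℤ) - (k:ℤ) →
      g i = f (2*i + n₀) ∘ f (2*i + n₀ - 1) := by
    intro i h1 h2; simp only [hgdef]
    rw [if_neg (by omega), if_pos h2]
  have hg3 : ∀ i : ℤ, -(N:ℤ) - (k:ℤ) < i → i ≤ -(N:ℤ) →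
      g i = hp (i + N + k - 1).toNat := by
    intro i h1 h2; simp only [hgdef]
    rw [if_neg (by omega), if_neg (by omega), if_pos h2]
  have hg4 : ∀ i : ℤ, -(N:ℤ) < i → i < (N:ℤ) + (k:ℤ) → g i = id := by
    intro i h1 h2; simp only [hgdef]
    rw [if_neg (by omega), if_neg (by omega), if_neg (by omega), if_pos h2]
  have hg5 : ∀ i : ℤ, (N:ℤ) + (k:ℤ) ≤ i → i < (n₀:ℤ) →
      g i = f (2*i - n₀ + 1) ∘ f (2*i - n₀) := by
    intro i h1 h2; simp only [hgdef]
    rw [if_neg (by omega), if_neg (by omega), if_neg (by omega), if_neg (by omega)]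
  refine ⟨n₀, g, ?_, ?_, ?_, ?_⟩
  · -- diffeos
    intro i
    by_cases c1 : i ≤ -(n₀:ℤ) ∨ (n₀:ℤ) ≤ i
    · rw [hg1 i c1]; exact hf i
    push_neg at c1
    by_cases c2 : i ≤ -(N:ℤ) - (k:ℤ)
    · rw [hg2 i c1.1 c2]; exact comp_diffeo (hf _) (hf _)
    push_neg at c2
    by_cases c3 : i ≤ -(N:ℤ)
    · rw [hg3 i c2 c3]; exact hpd _
    push_neg at c3
    by_cases c4 : i < (N:ℤ) + (k:ℤ)
    · rw [hg4 i c3 c4]; exact id_diffeo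
    push_neg at c4
    · rw [hg5 i c4 c1.2]; exact comp_diffeo (hf _) (hf _)
  · -- smallness
    intro i
    by_cases c1 : i ≤ -(n₀:ℤ) ∨ (n₀:ℤ) ≤ i
    · rw [hg1 i c1]
      refine lt_trans (hsmallf i ?_) hε'ε
      rcases c1 with h|h
      · rw [abs_of_nonpos (by omega)]; omega
      · rw [abs_of_nonneg (by omega)]; omega
    push_neg at c1
    by_cases c2 : i ≤ -(N:ℤ) - (k:ℤ)
    · rw [hg2 i c1.1 c2]
      refine distId_comp_lt (hf _) (hf _) hε'le1 hε'5 (hsmallf _ ?_) (hsmallf _ ?_)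
      · rw [abs_of_nonpos (by omega)]; omega
      · rw [abs_of_nonpos (by omega)]; omega
    push_neg at c2
    by_cases c3 : i ≤ -(N:ℤ)
    · rw [hg3 i c2 c3]; exact lt_trans (hps _) hε'ε
    push_neg at c3
    by_cases c4 : i < (N:ℤ) + (k:ℤ)
    · rw [hg4 i c3 c4, distId_id]; exact hε
    push_neg at c4
    · rw [hg5 i c4 c1.2]
      refine distId_comp_lt (hf _) (hf _) hε'le1 hε'5 (hsmallf _ ?_) (hsmallf _ ?_)
      · rw [abs_of_nonneg (by omega)]; omega
      · rw [abs_of_nonneg (by omega)]; omega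
  · -- equality outside
    intro i hi
    apply hg1
    rcases le_or_gt 0 i with h|h
    · rw [abs_of_nonneg h] at hi; omega
    · rw [abs_of_neg h] at hi; omega
  · -- composition equality
    intro z hz
    have hwz : f (-(n₀:ℤ)) z ∈ II := (hf _).mapsTo hz
    rw [compRange_eq_compN g (-(n₀:ℤ)), compRange_eq_compN f (-(n₀:ℤ))]
    set U : ℕ → ℝ → ℝ := fun j => g (-(n₀:ℤ) + (j:ℤ)) with hUdef
    set V : ℕ → ℝ → ℝ := fun j => f (-(n₀:ℤ) + (j:ℤ)) with hVdef
    set BotF : ℝ → ℝ := compN (fun j => f (1 - (n₀:ℤ) + (j:ℤ))) (2*k) with hBotdef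
    set TopF : ℝ → ℝ := compN (fun j => f ((N:ℤ) + (j:ℤ))) (2*k) with hTopdef
    have hU1 : compN U 1 = f (-(n₀:ℤ)) := by
      funext w
      show g (-(n₀:ℤ) + ((0:ℕ):ℤ)) w = f (-(n₀:ℤ)) w
      rw [show (-(n₀:ℤ) + ((0:ℕ):ℤ)) = -(n₀:ℤ) by omega, hg1 _ (Or.inl le_rfl)]
    have hB1 : compN (fun j => U (1 + j)) k = BotF := by
      have h1 : compN (fun j => U (1 + j)) k =
          compN (fun j => f (1 - (n₀:ℤ) + 2*(j:ℤ) + 1) ∘ f (1 - (n₀:ℤ) + 2*(j:ℤ))) k := by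
        apply compN_congr
        intro j hj
        show g (-(n₀:ℤ) + ((1 + j : ℕ):ℤ)) = _
        rw [hg2 _ (by omega) (by omega)]
        rw [show 2*(-(n₀:ℤ) + ((1 + j : ℕ):ℤ)) + (n₀:ℤ) - 1 = 1 - (n₀:ℤ) + 2*(j:ℤ) by omega,
          show 2*(-(n₀:ℤ) + ((1 + j : ℕ):ℤ)) + (n₀:ℤ) = 1 - (n₀:ℤ) + 2*(j:ℤ) + 1 by omega]
      rw [h1]
      exact (compN_pair f (1 - (n₀:ℤ)) k).trans hBotdef.symm
    have hB2 : compN (fun j => U (1 + (k + j))) k = compN hp k := by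
      apply compN_congr
      intro j hj
      show g (-(n₀:ℤ) + ((1 + (k + j) : ℕ):ℤ)) = hp j
      rw [hg3 _ (by omega) (by omega),
        show (-(n₀:ℤ) + ((1 + (k + j) : ℕ):ℤ) + (N:ℤ) + (k:ℤ) - 1).toNat = j by omega]
    have hB3 : compN (fun j => U (1 + (k + (k + j)))) (2*N+k-1) = id := by
      apply compN_const_id
      intro j hj
      show g (-(n₀:ℤ) + ((1 + (k + (k + j)) : ℕ):ℤ)) = id
      exact hg4 _ (by omega) (by omega)
    have hB4 : compN (fun j => U (1 + (k + (k + ((2*N+k-1) + j))))) k = TopF := by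
      have h1 : compN (fun j => U (1 + (k + (k + ((2*N+k-1) + j))))) k =
          compN (fun j => f ((N:ℤ) + 2*(j:ℤ) + 1) ∘ f ((N:ℤ) + 2*(j:ℤ))) k := by
        apply compN_congr
        intro j hj
        show g (-(n₀:ℤ) + ((1 + (k + (k + ((2*N+k-1) + j))) : ℕ):ℤ)) = _
        rw [hg5 _ (by omega) (by omega)]
        rw [show 2*(-(n₀:ℤ) + ((1 + (k + (k + ((2*N+k-1) + j))) : ℕ):ℤ)) - (n₀:ℤ) + 1 =
            (N:ℤ) + 2*(j:ℤ) + 1 by omega,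
          show 2*(-(n₀:ℤ) + ((1 + (k + (k + ((2*N+k-1) + j))) : ℕ):ℤ)) - (n₀:ℤ) =
            (N:ℤ) + 2*(j:ℤ) by omega]
      rw [h1]
      exact (compN_pair f ((N:ℤ)) k).trans hTopdef.symm
    have hB5 : compN (fun j => U (1 + (k + (k + ((2*N+k-1) + (k + j)))))) 1 = f ((n₀:ℤ)) := by
      funext w
      show g (-(n₀:ℤ) + ((1 + (k + (k + ((2*N+k-1) + (k + 0)))) : ℕ):ℤ)) w = f (n₀:ℤ) w
      rw [show (-(n₀:ℤ) + ((1 + (k + (k + ((2*N+k-1) + (k + 0)))) : ℕ):ℤ)) = (n₀:ℤ) by omega,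
        hg1 _ (Or.inr le_rfl)]
    have hUeq : compN U (2*n₀+1) =
        (((f (n₀:ℤ) ∘ TopF) ∘ compN hp k) ∘ BotF) ∘ f (-(n₀:ℤ)) := by
      rw [show 2*n₀+1 = 1 + (k + (k + ((2*N+k-1) + (k + 1)))) by omega]
      rw [compN_add, compN_add, compN_add, compN_add, compN_add]
      beta_reduce
      rw [hB1, hB2, hB3, hB4, hB5, hU1]
      simp only [Function.comp_id, Function.id_comp]
    have hV1 : compN V 1 = f (-(n₀:ℤ)) := by
      funext w
      show f (-(n₀:ℤ) + ((0:ℕ):ℤ)) w = f (-(n₀:ℤ)) w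
      rw [show (-(n₀:ℤ) + ((0:ℕ):ℤ)) = -(n₀:ℤ) by omega]
    have hC1 : compN (fun j => V (1 + j)) (2*k) = BotF := by
      refine (compN_congr ?_).trans hBotdef.symm
      intro j hj
      show f (-(n₀:ℤ) + ((1 + j : ℕ):ℤ)) = f (1 - (n₀:ℤ) + (j:ℤ))
      rw [show -(n₀:ℤ) + ((1 + j : ℕ):ℤ) = 1 - (n₀:ℤ) + (j:ℤ) by omega]
    have hC2 : compN (fun j => V (1 + (2*k + j))) (2*N-1) = G := by
      refine (compN_congr ?_).trans hGdef.symm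
      intro j hj
      show f (-(n₀:ℤ) + ((1 + (2*k + j) : ℕ):ℤ)) = f (1 - (N:ℤ) + (j:ℤ))
      rw [show -(n₀:ℤ) + ((1 + (2*k + j) : ℕ):ℤ) = 1 - (N:ℤ) + (j:ℤ) by omega]
    have hC3 : compN (fun j => V (1 + (2*k + ((2*N-1) + j)))) (2*k) = TopF := by
      refine (compN_congr ?_).trans hTopdef.symm
      intro j hj
      show f (-(n₀:ℤ) + ((1 + (2*k + ((2*N-1) + j)) : ℕ):ℤ)) = f ((N:ℤ) + (j:ℤ))
      rw [show -(n₀:ℤ) + ((1 + (2*k + ((2*N-1) + j)) : ℕ):ℤ) = (N:ℤ) + (j:ℤ) by omega]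
    have hC4 : compN (fun j => V (1 + (2*k + ((2*N-1) + (2*k + j))))) 1 = f ((n₀:ℤ)) := by
      funext w
      show f (-(n₀:ℤ) + ((1 + (2*k + ((2*N-1) + (2*k + 0))) : ℕ):ℤ)) w = f (n₀:ℤ) w
      rw [show (-(n₀:ℤ) + ((1 + (2*k + ((2*N-1) + (2*k + 0))) : ℕ):ℤ)) = (n₀:ℤ) by omega]
    have hVeq : compN V (2*n₀+1) =
        (((f (n₀:ℤ) ∘ TopF) ∘ G) ∘ BotF) ∘ f (-(n₀:ℤ)) := by
      rw [show 2*n₀+1 = 1 + (2*k + ((2*N-1) + (2*k + 1))) by omega]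
      rw [compN_add, compN_add, compN_add, compN_add]
      beta_reduce
      rw [hC1, hC2, hC3, hC4, hV1]
    rw [hUeq, hVeq]
    simp only [Function.comp_apply]
    have hwB : BotF (f (-(n₀:ℤ)) z) ∈ II :=
      compN_mapsTo (fun j _ => (hf _).mapsTo) hwz
    rw [hptel _ hwB]
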